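/- Let Γ be a finite set, p a probability measure on Γ, L a transition rate on Γ, and q : Γ × Γ → ℝ≥0 a flux. Then the supremum over bounded ξ : Γ × Γ → ℝ of ∑_{x,y} ξ(x,y) q(x,y) − ∑_{x,y} (e^{ξ(x,y)} − 1) p(x) L(x,y) equals ∑_{x,y} ent(q(x,y)/(p(x)L(x,y))) · p(x)L(x,y) if q(x,y) = 0 whenever p(x)L(x,y) = 0, and equals +∞ otherwise; where ent(s) = s log s − s + 1. -/

import Mathlib

open Real Finset

noncomputable def ent (s : ℝ) : ℝ := s * Real.log s - s + 1

lemma key_upper (q m t : ℝ) (hq : 0 ≤ q) (hm : 0 ≤ m) (h : m = 0 → q = 0) :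
    t * q - (Real.exp t - 1) * m ≤ ent (q / m) * m := by
  rcases eq_or_lt_of_le hm with hm0 | hm0
  · have hq0 := h hm0.symm
    simp [ent, ← hm0, hq0]
  · rcases eq_or_lt_of_le hq with hq0 | hq0
    · have : ent (q / m) * m = m := by simp [ent, ← hq0]
      rw [this, ← hq0]
      nlinarith [Real.exp_pos t]
    · have hqm : 0 < q / m := div_pos hq0 hm0
      have h1 : (t - Real.log (q / m)) + 1 ≤ Real.exp (t - Real.log (q / m)) :=
        Real.add_one_le_exp _
      rw [Real.exp_sub, Real.exp_log hqm] at h1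
      have hent : ent (q / m) * m = q * Real.log (q / m) - q + m := by
        field_simp [ent]
        rw [ent]; linear_combination (Real.log (q / m) - 1) * (by field_simp : m * (q / m) = q)
      rw [hent]
      have h2 : (t - Real.log (q / m) + 1) * q ≤ (Real.exp t / (q / m)) * q := by
        exact mul_le_mul_of_nonneg_right h1 hq
      have h3 : (Real.exp t / (q / m)) * q = Real.exp t * m := by
        field_simp
      nlinarith

lemma key_lower (q m δ : ℝ) (hq : 0 ≤ q) (hm : 0 ≤ m) (h : m = 0 → q = 0) (hδ : 0 < δ) :
    ent (q / m) * m - δ * m ≤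
      (if 0 < q ∧ 0 < m then Real.log (q / m) else Real.log δ) * q
        - (Real.exp (if 0 < q ∧ 0 < m then Real.log (q / m) else Real.log δ) - 1) * m := by
  split_ifs with hc
  · obtain ⟨hq0, hm0⟩ := hc
    rw [Real.exp_log (div_pos hq0 hm0)]
    have hent : ent (q / m) * m = q * Real.log (q / m) - q + m := by
      field_simp [ent]
      rw [ent]; linear_combination (Real.log (q / m) - 1) * (by field_simp : m * (q / m) = q)
    rw [hent]
    have : q / m * m = q := by field_simp
    nlinarith [mul_nonneg hδ.le hm]
  · have hq0 : q = 0 := by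
      rcases eq_or_lt_of_le hq with h1 | h1
      · exact h1.symm
      · rcases eq_or_lt_of_le hm with h2 | h2
        · exact h (h2.symm)
        · exact absurd ⟨h1, h2⟩ hc
    rw [Real.exp_log hδ, hq0]
    rcases eq_or_lt_of_le hm with h2 | h2
    · simp [ent, ← h2]
    · simp [ent, hq0, (ne_of_gt h2)]
      nlinarith

theorem lagrangian_duality {Γ : Type*} [Fintype Γ]
    (p : Γ → ℝ) (hp0 : ∀ x, 0 ≤ p x) (hp1 : ∑ x, p x = 1)
    (L : Γ → Γ → ℝ) (hL : ∀ x y, 0 ≤ L x y)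
    (q : Γ → Γ → ℝ) (hq : ∀ x y, 0 ≤ q x y) :
    ((∀ x y, p x * L x y = 0 → q x y = 0) →
      (⨆ ξ : Γ × Γ → ℝ,
        ((∑ x, ∑ y, ξ (x, y) * q x y
          - ∑ x, ∑ y, (Real.exp (ξ (x, y)) - 1) * (p x * L x y) : ℝ) : EReal))
        = ((∑ x, ∑ y, ent (q x y / (p x * L x y)) * (p x * L x y) : ℝ) : EReal)) ∧
    ((¬ ∀ x y, p x * L x y = 0 → q x y = 0) →
      (⨆ ξ : Γ × Γ → ℝ,
        ((∑ x, ∑ y, ξ (x, y) * q x y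
          - ∑ x, ∑ y, (Real.exp (ξ (x, y)) - 1) * (p x * L x y) : ℝ) : EReal)) = ⊤) := by
  classical
  have hm : ∀ x y, 0 ≤ p x * L x y := fun x y => mul_nonneg (hp0 x) (hL x y)
  constructor
  · intro hac
    set target : ℝ := ∑ x, ∑ y, ent (q x y / (p x * L x y)) * (p x * L x y) with htarget
    set T : ℝ := ∑ x, ∑ y, p x * L x y with hT
    have hT0 : 0 ≤ T := Finset.sum_nonneg fun x _ => Finset.sum_nonneg fun y _ => hm x y
    -- upper bound
    have hub : ∀ ξ : Γ × Γ → ℝ,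
        (∑ x, ∑ y, ξ (x, y) * q x y
          - ∑ x, ∑ y, (Real.exp (ξ (x, y)) - 1) * (p x * L x y)) ≤ target := by
      intro ξ
      rw [← Finset.sum_sub_distrib]
      apply Finset.sum_le_sum
      intro x _
      rw [← Finset.sum_sub_distrib]
      apply Finset.sum_le_sum
      intro y _
      exact key_upper _ _ _ (hq x y) (hm x y) (hac x y)
    -- lower bound with parameter δ
    have hlb : ∀ δ : ℝ, 0 < δ → ∃ ξ : Γ × Γ → ℝ,
        target - δ * T ≤ ∑ x, ∑ y, ξ (x, y) * q x y
          - ∑ x, ∑ y, (Real.exp (ξ (x, y)) - 1) * (p x * L x y) := by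
      intro δ hδ
      refine ⟨fun z => if 0 < q z.1 z.2 ∧ 0 < p z.1 * L z.1 z.2
          then Real.log (q z.1 z.2 / (p z.1 * L z.1 z.2)) else Real.log δ, ?_⟩
      rw [← Finset.sum_sub_distrib]
      rw [htarget, hT, Finset.mul_sum, ← Finset.sum_sub_distrib]
      apply Finset.sum_le_sum
      intro x _
      rw [← Finset.sum_sub_distrib, Finset.mul_sum, ← Finset.sum_sub_distrib]
      apply Finset.sum_le_sum
      intro y _
      exact key_lower _ _ _ (hq x y) (hm x y) (hac x y) hδ
    set S : EReal := ⨆ ξ : Γ × Γ → ℝ,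
        ((∑ x, ∑ y, ξ (x, y) * q x y
          - ∑ x, ∑ y, (Real.exp (ξ (x, y)) - 1) * (p x * L x y) : ℝ) : EReal) with hS
    have hSle : S ≤ (target : EReal) := by
      apply iSup_le
      intro ξ
      exact_mod_cast hub ξ
    have hSge : ∀ δ : ℝ, 0 < δ → ((target - δ * T : ℝ) : EReal) ≤ S := by
      intro δ hδ
      obtain ⟨ξ, hξ⟩ := hlb δ hδ
      exact le_trans (by exact_mod_cast hξ) (le_iSup _ ξ)
    have hSnetop : S ≠ ⊤ := ne_top_of_le_ne_top (EReal.coe_ne_top _) hSle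
    have hSnebot : S ≠ ⊥ := by
      intro hbot
      have := hSge 1 one_pos
      rw [hbot] at this
      exact (EReal.coe_ne_bot _) (le_bot_iff.mp this)
    refine le_antisymm hSle ?_
    rw [← EReal.coe_toReal hSnetop hSnebot]
    apply EReal.coe_le_coe_iff.mpr
    apply le_of_forall_pos_le_add
    intro ε hε
    have hδ : 0 < ε / (T + 1) := div_pos hε (by linarith)
    have h1 := hSge _ hδ
    rw [← EReal.coe_toReal hSnetop hSnebot] at h1
    have h2 : target - (ε / (T + 1)) * T ≤ S.toReal := EReal.coe_le_coe_iff.mp h1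
    have h3 : (ε / (T + 1)) * T ≤ ε := by
      rw [div_mul_eq_mul_div, div_le_iff₀ (by linarith)]
      nlinarith
    linarith
  · intro hnac
    push_neg at hnac
    obtain ⟨x0, y0, hm0, hq0⟩ := hnac
    have hq0' : 0 < q x0 y0 := lt_of_le_of_ne (hq x0 y0) (Ne.symm hq0)
    rw [iSup_eq_top]
    intro b hb
    obtain ⟨r, hbr, -⟩ := EReal.exists_between_coe_real hb
    refine ⟨fun z => if z.1 = x0 ∧ z.2 = y0 then r / q x0 y0 else 0, ?_⟩
    have h1 : ∑ x, ∑ y, (if x = x0 ∧ y = y0 then r / q x0 y0 else 0) * q x y = r := by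
      rw [Finset.sum_eq_single x0]
      · rw [Finset.sum_eq_single y0]
        · simp [div_mul_cancel₀, hq0]
        · intro y _ hy
          simp [hy]
        · simp
      · intro x _ hx
        apply Finset.sum_eq_zero
        intro y _
        simp [hx]
      · simp
    have h2 : ∑ x, ∑ y, (Real.exp (if x = x0 ∧ y = y0 then r / q x0 y0 else 0) - 1)
        * (p x * L x y) = 0 := by
      apply Finset.sum_eq_zero
      intro x _
      apply Finset.sum_eq_zero
      intro y _
      by_cases hxy : x = x0 ∧ y = y0
      · rw [hxy.1, hxy.2, hm0]
        ring
      · simp [hxy]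
    simp only [h1, h2, sub_zero]
    exact hbr
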